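/- For any real u > 1 and any positive integer k, ∫_{-1}^{1} sgn(sin(k·arccos η))/(u - η) dη ≥ ((1 - √((u-1)/(u+1)))/(1 + √((u-1)/(u+1))))^k. -/

import Mathlib

open Real Finset MeasureTheory

lemma normSq_aux (z θ : ℝ) :
    Complex.normSq ((z:ℂ) - Complex.exp (θ * Complex.I)) = z^2 - 2*z*Real.cos θ + 1 := by
  rw [Complex.exp_mul_I]
  simp [Complex.normSq_apply, Complex.cos_ofReal_re, Complex.sin_ofReal_re]
  nlinarith [Real.sin_sq_add_cos_sq θ]

lemma prod_even (z : ℝ) (k : ℕ) (hk : k ≠ 0) :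
    ∏ j ∈ Finset.range k, (z^2 - 2*z*Real.cos (2*Real.pi*j/k) + 1) = (z^k - 1)^2 := by
  have hζ := Complex.isPrimitiveRoot_exp k hk
  have h := X_pow_sub_C_eq_prod hζ (Nat.pos_of_ne_zero hk) (one_pow k)
  have h2 := congrArg (Polynomial.eval (z:ℂ)) h
  simp only [Polynomial.eval_sub, Polynomial.eval_pow, Polynomial.eval_X, Polynomial.eval_C,
    Polynomial.eval_prod, Polynomial.eval_mul] at h2
  have h3 := congrArg Complex.normSq h2
  rw [map_prod] at h3
  have hcast : ((z:ℂ)^k - 1) = ((z^k - 1 : ℝ) : ℂ) := by push_cast; ring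
  rw [hcast, Complex.normSq_ofReal] at h3
  rw [← sq] at h3
  rw [h3]
  apply Finset.prod_congr rfl
  intro j hj
  have : (Complex.exp (2 * Real.pi * Complex.I / k)) ^ j * 1
      = Complex.exp ((2*Real.pi*j/k : ℝ) * Complex.I) := by
    rw [mul_one, ← Complex.exp_nat_mul]
    congr 1
    push_cast
    have : (k:ℂ) ≠ 0 := Nat.cast_ne_zero.mpr hk
    field_simp
  rw [this, normSq_aux]

lemma prod_odd (z : ℝ) (k : ℕ) (hk : k ≠ 0) :
    ∏ j ∈ Finset.range k, (z^2 - 2*z*Real.cos ((2*j+1)*Real.pi/k) + 1) = (z^k + 1)^2 := by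
  have hζ := Complex.isPrimitiveRoot_exp k hk
  have hα : (Complex.exp (Real.pi * Complex.I / k)) ^ k = -1 := by
    rw [← Complex.exp_nat_mul]
    have hk' : (k:ℂ) ≠ 0 := Nat.cast_ne_zero.mpr hk
    rw [show (k:ℂ) * (Real.pi * Complex.I / k) = Real.pi * Complex.I by field_simp]
    exact Complex.exp_pi_mul_I
  have h := X_pow_sub_C_eq_prod hζ (Nat.pos_of_ne_zero hk) hα
  have h2 := congrArg (Polynomial.eval (z:ℂ)) h
  simp only [Polynomial.eval_sub, Polynomial.eval_pow, Polynomial.eval_X, Polynomial.eval_C,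
    Polynomial.eval_prod, Polynomial.eval_mul] at h2
  have h3 := congrArg Complex.normSq h2
  rw [map_prod] at h3
  have hcast : ((z:ℂ)^k - -1) = ((z^k + 1 : ℝ) : ℂ) := by push_cast; ring
  rw [hcast, Complex.normSq_ofReal, ← sq] at h3
  rw [h3]
  apply Finset.prod_congr rfl
  intro j hj
  have : (Complex.exp (2 * Real.pi * Complex.I / k)) ^ j * Complex.exp (Real.pi * Complex.I / k)
      = Complex.exp (((2*j+1)*Real.pi/k : ℝ) * Complex.I) := by
    rw [← Complex.exp_nat_mul, ← Complex.exp_add]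
    congr 1
    push_cast
    have : (k:ℂ) ≠ 0 := Nat.cast_ne_zero.mpr hk
    field_simp
  rw [this, normSq_aux]

lemma aux_split (k : ℕ) (g : ℕ → ℝ) :
    ∑ m ∈ Finset.range (2*k), g m
      = ∑ j ∈ Finset.range k, g (2*j) + ∑ j ∈ Finset.range k, g (2*j+1) := by
  induction k with
  | zero => simp
  | succ n ih =>
      rw [show 2*(n+1) = 2*n+1+1 by ring, Finset.sum_range_succ, Finset.sum_range_succ, ih,
        Finset.sum_range_succ (fun j => g (2*j)), Finset.sum_range_succ (fun j => g (2*j+1))]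
      ring

lemma aux_sum (k : ℕ) (f : ℕ → ℝ) (hf : ∀ m ≤ 2*k, f (2*k - m) = f m) :
    ∑ m ∈ Finset.range k, (-1:ℝ)^m * (f (m+1) - f m)
      = ∑ m ∈ Finset.range (2*k), (-1:ℝ)^(m+1) * f m := by
  rw [two_mul, Finset.sum_range_add]
  have h2 : ∑ x ∈ Finset.range k, (-1:ℝ)^(k + x + 1) * f (k + x)
      = ∑ x ∈ Finset.range k, (-1:ℝ)^x * f (x+1) := by
    have hsymm : ∀ x ∈ Finset.range k, (-1:ℝ)^(k + x + 1) * f (k + x)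
        = (fun x => (-1:ℝ)^(k + x + 1) * f (k - x)) x := by
      intro x hx
      simp only [Finset.mem_range] at hx
      simp only
      congr 1
      rw [← hf (k + x) (by omega)]
      congr 1
      omega
    rw [Finset.sum_congr rfl hsymm, ← Finset.sum_range_reflect (fun x => (-1:ℝ)^(k + x + 1) * f (k - x)) k]
    apply Finset.sum_congr rfl
    intro j hj
    simp only [Finset.mem_range] at hj
    have e1 : k - (k - 1 - j) = j + 1 := by omega
    have e2 : k + (k - 1 - j) + 1 = 2*(k - j) + j := by omega
    rw [e1, e2, pow_add, pow_mul, neg_one_sq, one_pow, one_mul]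
  rw [h2]
  rw [← Finset.sum_add_distrib]
  apply Finset.sum_congr rfl
  intro m hm
  ring

lemma sign_sin_aux (n : ℕ) {x : ℝ} (h1 : n * π < x) (h2 : x < (n+1) * π) :
    Real.sign (Real.sin x) = (-1:ℝ)^n := by
  have hsin : Real.sin x = (-1:ℝ)^n * Real.sin (x - n*π) := by
    have := Real.sin_add_int_mul_pi (x - n*π) (n:ℤ)
    simp only [zpow_natCast] at this
    rw [← this]
    push_cast
    ring_nf
  have hpos : 0 < Real.sin (x - n*π) := by
    apply Real.sin_pos_of_pos_of_lt_pi <;> nlinarith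
  rcases Nat.even_or_odd n with he | ho
  · rw [he.neg_one_pow] at hsin ⊢
    rw [hsin, one_mul]
    exact Real.sign_of_pos hpos
  · rw [ho.neg_one_pow] at hsin ⊢
    rw [hsin]
    exact Real.sign_of_neg (by nlinarith)

lemma piece_aux (u : ℝ) (hu : 1 < u) (k : ℕ) (j : ℕ) (hj : j < k) :
    (IntervalIntegrable (fun η => Real.sign (Real.sin (k * Real.arccos η)) / (u - η)) volume
      (Real.cos (π - j*π/k)) (Real.cos (π - (j+1)*π/k))) ∧
    ∫ η in (Real.cos (π - j*π/k))..(Real.cos (π - (j+1)*π/k)),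
        Real.sign (Real.sin (k * Real.arccos η)) / (u - η)
      = (-1:ℝ)^(k+j+1) * (Real.log (u - Real.cos (π - j*π/k)) - Real.log (u - Real.cos (π - (j+1)*π/k))) := by
  have hk0 : 0 < k := by omega
  have hkpos : (0:ℝ) < k := by exact_mod_cast hk0
  have hπ := Real.pi_pos
  set α := π - (j+1)*π/k with hα
  set β := π - j*π/k with hβ
  have hjk : (j:ℝ) + 1 ≤ k := by exact_mod_cast hj
  have hα0 : 0 ≤ α := by
    rw [hα]; rw [sub_nonneg, div_le_iff₀ hkpos]; nlinarith
  have hβπ : β ≤ π := by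
    rw [hβ]; have : 0 ≤ (j:ℝ)*π/k := by positivity
    linarith
  have hαβ : α < β := by
    rw [hα, hβ]
    have : (j:ℝ)*π/k < ((j:ℝ)+1)*π/k := by
      rw [div_lt_div_iff₀ hkpos hkpos]
      nlinarith
    linarith
  set a := Real.cos β with ha
  set b := Real.cos α with hb
  have hab : a < b := Real.strictAntiOn_cos ⟨hα0, le_trans (le_of_lt hαβ) hβπ⟩ ⟨le_trans hα0 (le_of_lt hαβ), hβπ⟩ hαβ
  have ha1 : -1 ≤ a := Real.neg_one_le_cos β
  have hb1 : b ≤ 1 := Real.cos_le_one α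
  set n := k - 1 - j with hn
  have hnc : (n:ℝ) = (k:ℝ) - 1 - j := by
    have h' : n + (1+j) = k := by omega
    have := congrArg (Nat.cast : ℕ → ℝ) h'
    push_cast at this
    linarith
  have hEq : ∀ x ∈ Set.Ioo a b, Real.sign (Real.sin (k * Real.arccos x)) / (u - x)
      = (-1:ℝ)^(k+j+1) * (u - x)⁻¹ := by
    intro x hx
    have hx1 : -1 ≤ x := le_trans ha1 (le_of_lt hx.1)
    have hx2 : x ≤ 1 := le_trans (le_of_lt hx.2) hb1
    have harc1 : Real.arccos x < β := by
      by_contra hc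
      push_neg at hc
      have := Real.cos_le_cos_of_nonneg_of_le_pi (le_trans hα0 (le_of_lt hαβ)) (Real.arccos_le_pi x) hc
      rw [Real.cos_arccos hx1 hx2] at this
      exact absurd (lt_of_lt_of_le hx.1 this) (lt_irrefl _)
    have harc2 : α < Real.arccos x := by
      by_contra hc
      push_neg at hc
      have := Real.cos_le_cos_of_nonneg_of_le_pi (Real.arccos_nonneg x) (le_trans (le_of_lt hαβ) hβπ) hc
      rw [Real.cos_arccos hx1 hx2] at this
      exact absurd (lt_of_le_of_lt this hx.2) (lt_irrefl _)
    have hlo : (n:ℝ) * π < k * Real.arccos x := by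
      have : (k:ℝ) * α = n * π := by
        rw [hα, hnc]; field_simp; ring
      rw [← this]
      exact (mul_lt_mul_iff_right₀ hkpos).2 harc2
    have hhi : k * Real.arccos x < ((n:ℝ)+1) * π := by
      have : (k:ℝ) * β = ((n:ℝ)+1) * π := by
        rw [hβ, hnc]; field_simp; ring
      rw [← this]
      exact (mul_lt_mul_iff_right₀ hkpos).2 harc1
    rw [sign_sin_aux n hlo hhi]
    rw [div_eq_mul_inv]
    congr 1
    have : k + j + 1 = n + 2*(j+1) := by omega
    rw [this, pow_add, pow_mul, neg_one_sq, one_pow, mul_one]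
  have haeq : ∀ᵐ (x:ℝ), x ∈ Set.uIoc a b → Real.sign (Real.sin (k * Real.arccos x)) / (u - x)
      = (-1:ℝ)^(k+j+1) * (u - x)⁻¹ := by
    have h1 : ∀ᵐ (x:ℝ), x ≠ b := by
      refine MeasureTheory.ae_iff.2 ?_
      have : {x : ℝ | ¬ x ≠ b} = {b} := by ext y; simp
      rw [this]
      exact Real.volume_singleton
    filter_upwards [h1] with x hx hmem
    rw [Set.uIoc_of_le (le_of_lt hab)] at hmem
    exact hEq x ⟨hmem.1, lt_of_le_of_ne hmem.2 hx⟩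
  have hcont : ContinuousOn (fun x => (-1:ℝ)^(k+j+1) * (u - x)⁻¹) (Set.uIcc a b) := by
    apply ContinuousOn.mul continuousOn_const
    apply ContinuousOn.inv₀ (Continuous.continuousOn (by continuity))
    intro x hx
    rw [Set.uIcc_of_le (le_of_lt hab)] at hx
    have : x ≤ 1 := le_trans hx.2 hb1
    linarith
  have hg_int : IntervalIntegrable (fun x => (-1:ℝ)^(k+j+1) * (u - x)⁻¹) volume a b :=
    hcont.intervalIntegrable
  have hF_int : IntervalIntegrable (fun η => Real.sign (Real.sin (k * Real.arccos η)) / (u - η)) volume a b := by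
    rw [intervalIntegrable_iff] at hg_int ⊢
    apply hg_int.congr
    exact ((MeasureTheory.ae_restrict_iff' measurableSet_uIoc).2 (by filter_upwards [haeq] with x h hx; exact (h hx).symm))
  refine ⟨hF_int, ?_⟩
  rw [intervalIntegral.integral_congr_ae haeq, intervalIntegral.integral_const_mul]
  congr 1
  have hderiv : ∀ x ∈ Set.uIcc a b, HasDerivAt (fun y => -Real.log (u - y)) ((u - x)⁻¹) x := by
    intro x hx
    rw [Set.uIcc_of_le (le_of_lt hab)] at hx
    have hux : 0 < u - x := by have : x ≤ 1 := le_trans hx.2 hb1; linarith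
    have hd : HasDerivAt (fun y => u - y) (-1) x := by
      simpa using (hasDerivAt_id x).const_sub u
    have := ((Real.hasDerivAt_log (ne_of_gt hux)).comp x hd).neg
    exact this.congr_deriv (by ring)
  have hint : IntervalIntegrable (fun x => (u - x)⁻¹) volume a b := by
    apply ContinuousOn.intervalIntegrable
    apply ContinuousOn.inv₀ (Continuous.continuousOn (by continuity))
    intro x hx
    rw [Set.uIcc_of_le (le_of_lt hab)] at hx
    have : x ≤ 1 := le_trans hx.2 hb1
    linarith
  rw [intervalIntegral.integral_eq_sub_of_hasDerivAt hderiv hint]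
  ring

lemma base_aux (u : ℝ) (hu : 1 < u) :
    (1 - Real.sqrt ((u - 1) / (u + 1))) / (1 + Real.sqrt ((u - 1) / (u + 1)))
      = u - Real.sqrt (u^2 - 1) := by
  have h1 : (0:ℝ) ≤ u - 1 := by linarith
  have h2 : (0:ℝ) < u + 1 := by linarith
  set a := Real.sqrt (u - 1) with ha
  set b := Real.sqrt (u + 1) with hb
  have ha2 : a^2 = u - 1 := Real.sq_sqrt h1
  have hb2 : b^2 = u + 1 := Real.sq_sqrt (le_of_lt h2)
  have hbpos : 0 < b := Real.sqrt_pos.2 h2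
  have hann : 0 ≤ a := Real.sqrt_nonneg _
  have hdiv : Real.sqrt ((u - 1) / (u + 1)) = a / b := Real.sqrt_div h1 _
  have hs : Real.sqrt (u^2 - 1) = a * b := by
    rw [show u^2 - 1 = (u-1)*(u+1) by ring, Real.sqrt_mul h1]
  rw [hdiv, hs]
  have hden : 0 < 1 + a / b := by positivity
  rw [div_eq_iff (ne_of_gt hden)]
  field_simp
  nlinarith [ha2, hb2, hbpos]

set_option maxHeartbeats 1000000 in
theorem stmt_15 (u : ℝ) (hu : 1 < u) (k : ℕ) (hk : 1 ≤ k) :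
    (∫ η in (-1 : ℝ)..1, Real.sign (Real.sin (k * Real.arccos η)) / (u - η)) ≥
      ((1 - Real.sqrt ((u - 1) / (u + 1))) /
        (1 + Real.sqrt ((u - 1) / (u + 1)))) ^ k := by
  have hk0 : k ≠ 0 := by omega
  have hkpos : (0:ℝ) < k := by exact_mod_cast Nat.pos_of_ne_zero hk0
  have hπ := Real.pi_pos
  set s := Real.sqrt (u^2 - 1) with hs
  have hs2 : s^2 = u^2 - 1 := Real.sq_sqrt (by nlinarith)
  have hspos : 0 < s := Real.sqrt_pos.2 (by nlinarith)
  set z := u + s with hz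
  have hz1 : 1 < z := by nlinarith
  have hzmul : z * (u - s) = 1 := by rw [hz]; nlinarith
  have hus : u - s = z⁻¹ := eq_inv_of_mul_eq_one_left (by rw [mul_comm] at hzmul; exact hzmul)
  have h2uz : z^2 + 1 = 2*u*z := by rw [hz]; nlinarith
  set A : ℕ → ℝ := fun j => Real.cos (π - j*π/k) with hA
  have hA0 : A 0 = -1 := by simp [hA, Real.cos_pi]
  have hAk : A k = 1 := by
    show Real.cos (π - (k:ℝ)*π/k) = 1
    rw [show π - (k:ℝ)*π/k = 0 by field_simp; ring, Real.cos_zero]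
  set G : ℕ → ℝ := fun m => Real.log (u - Real.cos (m*π/k)) with hG
  have hint : ∀ j < k, IntervalIntegrable
      (fun η => Real.sign (Real.sin (k * Real.arccos η)) / (u - η)) volume (A j) (A (j+1)) := by
    intro j hj
    have := (piece_aux u hu k j hj).1
    rw [hA]
    simp only [Nat.cast_add, Nat.cast_one]
    convert this using 3 <;> push_cast <;> ring_nf
  have step1 : (∫ η in (-1 : ℝ)..1, Real.sign (Real.sin (k * Real.arccos η)) / (u - η))
      = ∑ j ∈ Finset.range k, ∫ η in (A j)..(A (j+1)),
          Real.sign (Real.sin (k * Real.arccos η)) / (u - η) := by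
    rw [intervalIntegral.sum_integral_adjacent_intervals hint, hA0, hAk]
  have step2 : ∀ j ∈ Finset.range k, (∫ η in (A j)..(A (j+1)),
        Real.sign (Real.sin (k * Real.arccos η)) / (u - η))
      = (-1:ℝ)^(k+j+1) * (Real.log (u - A j) - Real.log (u - A (j+1))) := by
    intro j hj
    simp only [Finset.mem_range] at hj
    have := (piece_aux u hu k j hj).2
    rw [hA]
    simp only [Nat.cast_add, Nat.cast_one]
    convert this using 3 <;> push_cast <;> ring_nf
  have hAG : ∀ j ≤ k, Real.log (u - A j) = G (k - j) := by
    intro j hj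
    have hc : ((k - j : ℕ) : ℝ) = (k:ℝ) - j := by push_cast [Nat.cast_sub hj]; ring
    have hang : ((k - j : ℕ):ℝ)*π/k = π - (j:ℝ)*π/k := by
      rw [hc]; field_simp
    simp only [hA, hG]
    rw [hang]
  have step3 : ∑ j ∈ Finset.range k, (-1:ℝ)^(k+j+1) * (Real.log (u - A j) - Real.log (u - A (j+1)))
      = ∑ m ∈ Finset.range k, (-1:ℝ)^m * (G (m+1) - G m) := by
    rw [← Finset.sum_range_reflect (fun m => (-1:ℝ)^m * (G (m+1) - G m)) k]
    apply Finset.sum_congr rfl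
    intro j hj
    simp only [Finset.mem_range] at hj
    rw [hAG j (by omega), hAG (j+1) (by omega)]
    have e1 : k - j = (k - 1 - j) + 1 := by omega
    have e2 : k - (j+1) = k - 1 - j := by omega
    have e3 : k + j + 1 = (k - 1 - j) + 2*(j+1) := by omega
    rw [e1, e2, e3, pow_add, pow_mul, neg_one_sq, one_pow, mul_one]
  have hGsymm : ∀ m ≤ 2*k, G (2*k - m) = G m := by
    intro m hm
    have hc : ((2*k - m : ℕ) : ℝ) = 2*(k:ℝ) - m := by push_cast [Nat.cast_sub hm]; ring
    simp only [hG]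
    rw [hc, show (2*(k:ℝ) - m)*π/k = 2*π - m*π/k by field_simp, Real.cos_two_pi_sub]
  have hpos_cos : ∀ x : ℝ, (0:ℝ) < u - Real.cos x := by
    intro x
    have := Real.cos_le_one x
    linarith
  have h2z : (0:ℝ) < 2*z := by linarith
  have hzk1 : 1 < z^k := one_lt_pow₀ hz1 hk0
  have hprod_even : ∏ j ∈ Finset.range k, (u - Real.cos (((2*j:ℕ):ℝ)*π/k)) = (z^k-1)^2 / (2*z)^k := by
    have key : ∀ j ∈ Finset.range k, (2*z) * (u - Real.cos (((2*j:ℕ):ℝ)*π/k))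
        = z^2 - 2*z*Real.cos (2*π*j/k) + 1 := by
      intro j hj
      rw [show ((2*j:ℕ):ℝ)*π/k = 2*π*j/k by push_cast; ring]
      nlinarith [h2uz]
    have hp := Finset.prod_congr rfl key
    rw [Finset.prod_mul_distrib, Finset.prod_const, prod_even z k hk0, Finset.card_range] at hp
    have h2zk : (0:ℝ) < (2*z)^k := by positivity
    rw [eq_div_iff (ne_of_gt h2zk)]
    linarith [hp]
  have hprod_odd : ∏ j ∈ Finset.range k, (u - Real.cos (((2*j+1:ℕ):ℝ)*π/k)) = (z^k+1)^2 / (2*z)^k := by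
    have key : ∀ j ∈ Finset.range k, (2*z) * (u - Real.cos (((2*j+1:ℕ):ℝ)*π/k))
        = z^2 - 2*z*Real.cos ((2*(j:ℝ)+1)*π/k) + 1 := by
      intro j hj
      rw [show ((2*j+1:ℕ):ℝ)*π/k = (2*(j:ℝ)+1)*π/k by push_cast; ring]
      nlinarith [h2uz]
    have hp := Finset.prod_congr rfl key
    rw [Finset.prod_mul_distrib, Finset.prod_const, prod_odd z k hk0, Finset.card_range] at hp
    have h2zk : (0:ℝ) < (2*z)^k := by positivity
    rw [eq_div_iff (ne_of_gt h2zk)]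
    linarith [hp]
  have hGeven : ∑ j ∈ Finset.range k, G (2*j)
      = Real.log ((z^k-1)^2) - Real.log ((2*z)^k) := by
    have : ∑ j ∈ Finset.range k, G (2*j)
        = Real.log (∏ j ∈ Finset.range k, (u - Real.cos (((2*j:ℕ):ℝ)*π/k))) :=
      (Real.log_prod (fun j hj => ne_of_gt (hpos_cos _))).symm
    rw [this, hprod_even, Real.log_div (ne_of_gt (by nlinarith [hzk1])) (by positivity)]
  have hGodd : ∑ j ∈ Finset.range k, G (2*j+1)
      = Real.log ((z^k+1)^2) - Real.log ((2*z)^k) := by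
    have : ∑ j ∈ Finset.range k, G (2*j+1)
        = Real.log (∏ j ∈ Finset.range k, (u - Real.cos (((2*j+1:ℕ):ℝ)*π/k))) :=
      (Real.log_prod (fun j hj => ne_of_gt (hpos_cos _))).symm
    rw [this, hprod_odd, Real.log_div (ne_of_gt (by positivity)) (by positivity)]
  have hIval : (∫ η in (-1 : ℝ)..1, Real.sign (Real.sin (k * Real.arccos η)) / (u - η))
      = 2 * (Real.log (z^k+1) - Real.log (z^k-1)) := by
    rw [step1, Finset.sum_congr rfl step2, step3, aux_sum k G hGsymm,
      aux_split k (fun m => (-1:ℝ)^(m+1) * G m)]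
    have hsgn1 : ∀ j : ℕ, ((-1:ℝ))^(2*j+1) = -1 := by
      intro j; rw [pow_succ, pow_mul, neg_one_sq, one_pow, one_mul]
    have hsgn2 : ∀ j : ℕ, ((-1:ℝ))^(2*j+1+1) = 1 := by
      intro j; rw [pow_succ, hsgn1]; norm_num
    simp only [hsgn1, hsgn2, neg_one_mul, one_mul]
    have hneg : ∑ x ∈ Finset.range k, -G (2*x) = -(∑ x ∈ Finset.range k, G (2*x)) := by
      simp
    rw [hneg, hGeven, hGodd, Real.log_pow (n := 2) (x := z^k-1), Real.log_pow (n := 2) (x := z^k+1)]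
    push_cast
    ring
  rw [hIval, base_aux u hu, ← hs, hus, inv_pow]
  set t := z^k with htdef
  have ht1 : (0:ℝ) < t - 1 := by linarith
  have hlog := Real.log_le_sub_one_of_pos (show (0:ℝ) < (t-1)/(t+1) by positivity)
  rw [Real.log_div (ne_of_gt ht1) (by positivity)] at hlog
  have hq : (t-1)/(t+1) - 1 = -(2/(t+1)) := by
    field_simp
    ring
  have hB : t⁻¹ ≤ 4/(t+1) := by
    rw [inv_eq_one_div, div_le_div_iff₀ (by linarith) (by linarith)]
    linarith
  rw [hq] at hlog
  have h4 : (4:ℝ)/(t+1) = 2*(2/(t+1)) := by ring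
  rw [h4] at hB
  linarith [hlog, hB]
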